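/- Let E be a finite-dimensional real inner product space and λ ∈ ℝ. Let fₙ, f : E → ℝ be λ-concave continuously differentiable functions such that fₙ → f pointwise on E. Let αₙ, α : [0, ∞) → E be gradient curves, i.e. differentiable curves with αₙ′(t) = ∇fₙ(αₙ(t)) and α′(t) = ∇f(α(t)) for all t ≥ 0, and suppose αₙ(0) → α(0). Then αₙ(t) → α(t) for every t ≥ 0. -/

import Mathlib

open scoped RealInnerProductSpace
open Filter Topology

section aux
variable {E : Type*} [NormedAddCommGroup E] [InnerProductSpace ℝ E]

/-- Supporting-hyperplane inequality for a concave differentiable function. -/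
lemma concave_support_ineq {φ : E → ℝ} (hφ : ConcaveOn ℝ Set.univ φ)
    {x : E} {G : E} (hd : HasFDerivAt φ (innerSL ℝ G) x) (z : E) :
    φ z ≤ φ x + ⟪G, z - x⟫ := by
  set c := z - x with hc
  set ψ : ℝ → ℝ := fun s => φ (s • c + x) with hψdef
  have hψ : ConcaveOn ℝ Set.univ ψ := by
    have h1 := hφ.comp_affineMap (AffineMap.lineMap (x : E) (z : E))
    have h2 : ψ = φ ∘ (AffineMap.lineMap (x : E) (z : E)) := by
      funext s
      simp [hψdef, AffineMap.lineMap_apply, hc]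
    rw [h2]
    simpa using h1
  have hγ : HasDerivAt (fun s : ℝ => s • c + x) c 0 := by
    simpa using ((hasDerivAt_id (0:ℝ)).smul_const c).add_const x
  have hd0 : HasDerivAt ψ ⟪G, c⟫ 0 := by
    have hx0 : (0:ℝ) • c + x = x := by simp
    have hd' : HasFDerivAt φ (innerSL ℝ G) ((0:ℝ) • c + x) := by rw [hx0]; exact hd
    exact hd'.comp_hasDerivAt (0:ℝ) hγ
  -- scalar concave inequality
  have hneg : ConvexOn ℝ Set.univ (-ψ) := hψ.neg
  have := hneg.le_slope_of_hasDerivAt (Set.mem_univ (0:ℝ)) (Set.mem_univ (1:ℝ)) one_pos hd0.neg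
  have hslope : slope (-ψ) 0 1 = ψ 0 - ψ 1 := by
    simp [slope_def_field]
    ring
  have h1 : ψ 1 = φ z := by simp [hψdef, hc]
  have h0 : ψ 0 = φ x := by simp [hψdef]
  rw [hslope] at this
  rw [← h1, ← h0]
  linarith

/-- Derivative of `y ↦ f y - lam/2 * ‖y‖^2`. -/
lemma phi_hasFDerivAt {f : E → ℝ} {g : E → E} (lam : ℝ) {x : E}
    (hf : HasFDerivAt f (innerSL ℝ (g x)) x) :
    HasFDerivAt (fun y => f y - lam / 2 * ‖y‖ ^ 2) (innerSL ℝ (g x - lam • x)) x := by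
  have h2 : HasFDerivAt (fun y : E => ‖y‖ ^ 2) (2 • (innerSL ℝ x)) x :=
    (hasStrictFDerivAt_norm_sq x).hasFDerivAt
  have h3 : HasFDerivAt (fun y => f y - lam / 2 * ‖y‖ ^ 2)
      (innerSL ℝ (g x) - (lam / 2) • 2 • innerSL ℝ x) x := hf.sub (h2.const_mul (lam / 2))
  convert h3 using 1
  ext v
  simp [inner_sub_left, inner_smul_left, real_inner_smul_left]
  ring

/-- Gradient monotonicity for concave functions. -/
lemma concave_grad_mono {φ : E → ℝ} (hφ : ConcaveOn ℝ Set.univ φ) {G : E → E}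
    (hd : ∀ x, HasFDerivAt φ (innerSL ℝ (G x)) x) (x y : E) :
    ⟪G x - G y, x - y⟫ ≤ 0 := by
  have h1 := concave_support_ineq hφ (hd x) y
  have h2 := concave_support_ineq hφ (hd y) x
  have e1 : ⟪G x - G y, x - y⟫ = - ⟪G x, y - x⟫ - ⟪G y, x - y⟫ := by
    rw [inner_sub_left]
    rw [show y - x = -(x - y) by abel]
    rw [inner_neg_right]
    ring
  rw [e1]
  linarith


/-- Pointwise convergence of gradients (tested against a vector). -/
lemma inner_grad_tendsto {φ : ℕ → E → ℝ} {φl : E → ℝ} {G : ℕ → E → E} {Gl : E → E}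
    (hconc : ∀ n, ConcaveOn ℝ Set.univ (φ n))
    (hd : ∀ n x, HasFDerivAt (φ n) (innerSL ℝ (G n x)) x)
    (hdl : ∀ x, HasFDerivAt φl (innerSL ℝ (Gl x)) x)
    (hpt : ∀ y, Tendsto (fun n => φ n y) atTop (𝓝 (φl y)))
    (y v : E) : Tendsto (fun n => (⟪G n y, v⟫ : ℝ)) atTop (𝓝 ⟪Gl y, v⟫) := by
  rw [Metric.tendsto_atTop]
  intro ε hε
  set m : ℝ := ⟪Gl y, v⟫ with hm
  set ψ : ℝ → ℝ := fun s => φl (s • v + y) with hψdef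
  have hγ : HasDerivAt (fun s : ℝ => s • v + y) v 0 := by
    simpa using ((hasDerivAt_id (0:ℝ)).smul_const v).add_const y
  have hψd : HasDerivAt ψ m 0 := by
    have hx0 : (0:ℝ) • v + y = y := by simp
    have hd' : HasFDerivAt φl (innerSL ℝ (Gl y)) ((0:ℝ) • v + y) := by rw [hx0]; exact hdl y
    exact hd'.comp_hasDerivAt (0:ℝ) hγ
  have hslope : Tendsto (slope ψ 0) (𝓝[≠] (0:ℝ)) (𝓝 m) :=
    hasDerivAt_iff_tendsto_slope.mp hψd
  have h1 : ∀ᶠ s in 𝓝[≠] (0:ℝ), |slope ψ 0 s - m| < ε / 4 :=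
    hslope.eventually (eventually_abs_sub_lt m (by linarith))
  obtain ⟨sp, hsp1, hsp2⟩ :=
    ((h1.filter_mono (nhdsWithin_mono 0 fun s (hs : s ∈ Set.Ioi (0:ℝ)) => ne_of_gt hs)).and
      eventually_mem_nhdsWithin).exists
  obtain ⟨sm, hsm1, hsm2⟩ :=
    ((h1.filter_mono (nhdsWithin_mono 0 fun s (hs : s ∈ Set.Iio (0:ℝ)) => ne_of_lt hs)).and
      eventually_mem_nhdsWithin).exists
  have hsp_pos : 0 < sp := hsp2
  have hsm_neg : sm < 0 := hsm2
  have hspel : slope ψ 0 sp = (φl (sp • v + y) - φl y) / sp := by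
    simp [slope_def_field, hψdef]
  have hsmel : slope ψ 0 sm = (φl (sm • v + y) - φl y) / sm := by
    simp [slope_def_field, hψdef]
  rw [hspel] at hsp1
  rw [hsmel] at hsm1
  have keyp : ∀ n, (φ n (sp • v + y) - φ n y) / sp ≤ ⟪G n y, v⟫ := by
    intro n
    have h := concave_support_ineq (hconc n) (hd n y) (sp • v + y)
    have h2 : ⟪G n y, sp • v + y - y⟫ = sp * ⟪G n y, v⟫ := by
      simp [real_inner_smul_right]
    rw [div_le_iff₀ hsp_pos]
    rw [h2] at h
    linarith [mul_comm sp (⟪G n y, v⟫ : ℝ)]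
  have keym : ∀ n, (⟪G n y, v⟫ : ℝ) ≤ (φ n (sm • v + y) - φ n y) / sm := by
    intro n
    have h := concave_support_ineq (hconc n) (hd n y) (sm • v + y)
    have h2 : ⟪G n y, sm • v + y - y⟫ = sm * ⟪G n y, v⟫ := by
      simp [real_inner_smul_right]
    rw [le_div_iff_of_neg hsm_neg]
    rw [h2] at h
    linarith [mul_comm sm (⟪G n y, v⟫ : ℝ)]
  have tp : Tendsto (fun n => (φ n (sp • v + y) - φ n y) / sp) atTop
      (𝓝 ((φl (sp • v + y) - φl y) / sp)) := ((hpt _).sub (hpt y)).div_const sp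
  have tm : Tendsto (fun n => (φ n (sm • v + y) - φ n y) / sm) atTop
      (𝓝 ((φl (sm • v + y) - φl y) / sm)) := ((hpt _).sub (hpt y)).div_const sm
  rw [Metric.tendsto_atTop] at tp tm
  obtain ⟨N1, hN1⟩ := tp (ε / 4) (by linarith)
  obtain ⟨N2, hN2⟩ := tm (ε / 4) (by linarith)
  refine ⟨max N1 N2, fun n hn => ?_⟩
  have e1 := hN1 n (le_trans (le_max_left _ _) hn)
  have e2 := hN2 n (le_trans (le_max_right _ _) hn)
  rw [Real.dist_eq] at e1 e2 ⊢
  have k1 := keyp n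
  have k2 := keym n
  rw [abs_lt] at e1 e2 ⊢
  rw [abs_lt] at hsp1 hsm1
  constructor <;> [linarith [e1.1, e1.2, hsp1.1, hsp1.2]; linarith [e2.1, e2.2, hsm1.1, hsm1.2]]


/-- Strong pointwise convergence of gradients in finite dimension. -/
lemma grad_tendsto [FiniteDimensional ℝ E] {φ : ℕ → E → ℝ} {φl : E → ℝ}
    {G : ℕ → E → E} {Gl : E → E}
    (hconc : ∀ n, ConcaveOn ℝ Set.univ (φ n))
    (hd : ∀ n x, HasFDerivAt (φ n) (innerSL ℝ (G n x)) x)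
    (hdl : ∀ x, HasFDerivAt φl (innerSL ℝ (Gl x)) x)
    (hpt : ∀ y, Tendsto (fun n => φ n y) atTop (𝓝 (φl y)))
    (y : E) : Tendsto (fun n => G n y) atTop (𝓝 (Gl y)) := by
  set b := stdOrthonormalBasis ℝ E with hb
  have key : Tendsto (fun n => ∑ i, (⟪b i, G n y⟫ : ℝ) • b i) atTop
      (𝓝 (∑ i, (⟪b i, Gl y⟫ : ℝ) • b i)) := by
    refine tendsto_finset_sum _ fun i _ => Tendsto.smul_const ?_ (b i)
    have := inner_grad_tendsto hconc hd hdl hpt y (b i)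
    simpa [real_inner_comm] using this
  have e1 : ∀ n, ∑ i, (⟪b i, G n y⟫ : ℝ) • b i = G n y := fun n => b.sum_repr' (G n y)
  have e2 : ∑ i, (⟪b i, Gl y⟫ : ℝ) • b i = Gl y := b.sum_repr' (Gl y)
  rw [← e2]
  exact key.congr fun n => e1 n

/-- Uniform boundedness of the gradients on a compact set. -/
lemma grad_unif_bdd [FiniteDimensional ℝ E] {G : ℕ → E → E}
    (hmono : ∀ n x y, (⟪G n x - G n y, x - y⟫ : ℝ) ≤ 0)
    (hptG : ∀ y : E, ∃ C : ℝ, ∀ n, ‖G n y‖ ≤ C)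
    {K : Set E} (hK : IsCompact K) : ∃ C : ℝ, ∀ n, ∀ x ∈ K, ‖G n x‖ ≤ C := by
  rcases K.eq_empty_or_nonempty with hKe | hKne
  · exact ⟨0, fun n x hx => by simp [hKe] at hx⟩
  set b := stdOrthonormalBasis ℝ E with hb
  set d : ℕ := Module.finrank ℝ E with hdim
  set δ : ℝ := 1 / (2 * (d + 1)) with hδ
  have hδpos : 0 < δ := by positivity
  -- finite subcover by δ-balls
  have hcover : K ⊆ ⋃ z ∈ K, Metric.ball z δ := fun x hx =>
    Set.mem_biUnion hx (Metric.mem_ball_self hδpos)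
  obtain ⟨t, htK, htfin, htcover⟩ := hK.elim_finite_subcover_image
    (fun z _ => Metric.isOpen_ball) hcover
  -- bound function at reference points
  have href : ∀ p : E, ∃ C : ℝ, 0 ≤ C ∧ ∀ n, ‖G n p‖ ≤ C := by
    intro p
    obtain ⟨C, hC⟩ := hptG p
    exact ⟨max C 0, le_max_right _ _, fun n => le_trans (hC n) (le_max_left _ _)⟩
  choose c hc0 hcb using href
  -- reference points: z ± b i for z in t
  classical
  lift t to Finset E using htfin
  set A : Finset E := t.biUnion (fun z => Finset.image (fun i => z + b i) Finset.univ)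
    ∪ t.biUnion (fun z => Finset.image (fun i => z - b i) Finset.univ) with hA
  set C₀ : ℝ := ((A.sup fun p => ⌈c p⌉₊ : ℕ) : ℝ) with hC₀
  have hC₀nn : (0:ℝ) ≤ C₀ := Nat.cast_nonneg _
  have hC₀b : ∀ p ∈ A, ∀ n, ‖G n p‖ ≤ C₀ := by
    intro p hp n
    refine le_trans (hcb p n) (le_trans (Nat.le_ceil _) ?_)
    exact Nat.cast_le.mpr (Finset.le_sup (f := fun p => ⌈c p⌉₊) hp)
  refine ⟨2 * (d + 1) * (C₀ * (δ + 1)) * 2, fun n x hx => ?_⟩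
  obtain ⟨z, hz, hxz⟩ := Set.mem_iUnion₂.mp (htcover hx)
  have hzt : z ∈ t := hz
  have hdist : ‖x - z‖ < δ := by
    rw [← dist_eq_norm]; exact hxz
  have hxz2 : |(⟪G n x, x - z⟫ : ℝ)| ≤ ‖G n x‖ * δ :=
    le_trans (abs_real_inner_le_norm _ _)
      (mul_le_mul_of_nonneg_left hdist.le (norm_nonneg _))
  have step : ∀ p, p ∈ A → ‖x - p‖ ≤ δ + 1 → (⟪G n x, x - p⟫ : ℝ) ≤ C₀ * (δ + 1) := by
    intro p hp hnorm
    have h1 := hmono n x p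
    rw [inner_sub_left] at h1
    have h3 : (⟪G n p, x - p⟫ : ℝ) ≤ ‖G n p‖ * ‖x - p‖ := real_inner_le_norm _ _
    have h4 := hC₀b p hp n
    nlinarith [norm_nonneg (x - p), norm_nonneg (G n p)]
  -- coordinate estimates
  have coord : ∀ i, |(⟪G n x, b i⟫ : ℝ)| ≤ C₀ * (δ + 1) + δ * ‖G n x‖ := by
    intro i
    have hbi : ‖b i‖ = 1 := b.orthonormal.1 i
    have memA : z + b i ∈ A := by
      simp only [hA, Finset.mem_union, Finset.mem_biUnion, Finset.mem_image, Finset.mem_univ]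
      exact Or.inl ⟨z, hzt, i, ⟨trivial, rfl⟩⟩
    have memB : z - b i ∈ A := by
      simp only [hA, Finset.mem_union, Finset.mem_biUnion, Finset.mem_image, Finset.mem_univ]
      exact Or.inr ⟨z, hzt, i, ⟨trivial, rfl⟩⟩
    have eA : x - (z + b i) = (x - z) - b i := by abel
    have eB : x - (z - b i) = (x - z) + b i := by abel
    have nA : ‖x - (z + b i)‖ ≤ δ + 1 := by
      rw [eA]
      exact le_trans (norm_sub_le _ _) (by rw [hbi]; linarith)
    have nB : ‖x - (z - b i)‖ ≤ δ + 1 := by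
      rw [eB]
      exact le_trans (norm_add_le _ _) (by rw [hbi]; linarith)
    have sA := step _ memA nA
    have sB := step _ memB nB
    rw [eA, inner_sub_right] at sA
    rw [eB, inner_add_right] at sB
    rw [abs_le] at hxz2 ⊢
    constructor <;> [linarith [hxz2.1, hxz2.2]; linarith [hxz2.1, hxz2.2]]
  have hsum : ‖G n x‖ ≤ ∑ i, |(⟪G n x, b i⟫ : ℝ)| := by
    conv_lhs => rw [← b.sum_repr' (G n x)]
    refine le_trans (norm_sum_le _ _) (Finset.sum_le_sum fun i _ => ?_)
    rw [norm_smul, b.orthonormal.1 i, mul_one]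
    simp [Real.norm_eq_abs, real_inner_comm]
  have hsum2 : (∑ i, |(⟪G n x, b i⟫ : ℝ)|) ≤ (d : ℝ) * (C₀ * (δ + 1) + δ * ‖G n x‖) := by
    calc (∑ i, |(⟪G n x, b i⟫ : ℝ)|) ≤ ∑ _i : Fin d, (C₀ * (δ + 1) + δ * ‖G n x‖) :=
          Finset.sum_le_sum fun i _ => coord i
      _ = (d : ℝ) * (C₀ * (δ + 1) + δ * ‖G n x‖) := by
          rw [Finset.sum_const, Finset.card_univ, Fintype.card_fin, nsmul_eq_mul]
  have hdδ : (d : ℝ) * δ ≤ 1 / 2 := by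
    rw [hδ, mul_one_div, div_le_div_iff₀ (by positivity) two_pos]
    have : (0:ℝ) ≤ (d:ℝ) := Nat.cast_nonneg _
    linarith
  have hd0 : (0:ℝ) ≤ (d:ℝ) := Nat.cast_nonneg _
  nlinarith [norm_nonneg (G n x), mul_le_mul_of_nonneg_right hdδ (norm_nonneg (G n x)),
    mul_nonneg (mul_nonneg hC₀nn (by linarith : (0:ℝ) ≤ δ + 1)) hd0]

end aux

open MeasureTheory in
/-- Stability of gradient curves of λ-concave functions under pointwise convergence
(linear model of Lemma 2.3). -/
theorem gradient_curves_stable_under_convergence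
    {E : Type*} [NormedAddCommGroup E] [InnerProductSpace ℝ E] [FiniteDimensional ℝ E]
    (lam : ℝ) (f : ℕ → E → ℝ) (flim : E → ℝ)
    (g : ℕ → E → E) (glim : E → E)
    (hconc : ∀ n, ConcaveOn ℝ Set.univ (fun y => f n y - lam / 2 * ‖y‖ ^ 2))
    (hconclim : ConcaveOn ℝ Set.univ (fun y => flim y - lam / 2 * ‖y‖ ^ 2))
    (hg : ∀ n x, HasFDerivAt (f n) (innerSL ℝ (g n x)) x)
    (hgc : ∀ n, Continuous (g n))
    (hglim : ∀ x, HasFDerivAt flim (innerSL ℝ (glim x)) x)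
    (hglimc : Continuous glim)
    (hptws : ∀ y, Filter.Tendsto (fun n => f n y) Filter.atTop (nhds (flim y)))
    (α : ℕ → ℝ → E) (αlim : ℝ → E)
    (hα : ∀ n, ∀ t ∈ Set.Ici (0 : ℝ), HasDerivWithinAt (α n) (g n (α n t)) (Set.Ici 0) t)
    (hαlim : ∀ t ∈ Set.Ici (0 : ℝ), HasDerivWithinAt αlim (glim (αlim t)) (Set.Ici 0) t)
    (h0 : Filter.Tendsto (fun n => α n 0) Filter.atTop (nhds (αlim 0))) :
    ∀ t ≥ (0 : ℝ), Filter.Tendsto (fun n => α n t) Filter.atTop (nhds (αlim t)) := by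
  -- the drift-free parts of the data
  set G : ℕ → E → E := fun n x => g n x - lam • x with hGdef
  set Gl : E → E := fun x => glim x - lam • x with hGldef
  have hdG : ∀ n x, HasFDerivAt (fun y => f n y - lam / 2 * ‖y‖ ^ 2)
      (innerSL ℝ (G n x)) x := fun n x => phi_hasFDerivAt lam (hg n x)
  have hdGl : ∀ x, HasFDerivAt (fun y => flim y - lam / 2 * ‖y‖ ^ 2)
      (innerSL ℝ (Gl x)) x := fun x => phi_hasFDerivAt lam (hglim x)
  have hptφ : ∀ y, Tendsto (fun n => f n y - lam / 2 * ‖y‖ ^ 2) atTop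
      (𝓝 (flim y - lam / 2 * ‖y‖ ^ 2)) := fun y => (hptws y).sub_const _
  have hmono : ∀ n x y, (⟪G n x - G n y, x - y⟫ : ℝ) ≤ 0 :=
    fun n => concave_grad_mono (hconc n) (hdG n)
  have hGpt : ∀ y, Tendsto (fun n => G n y) atTop (𝓝 (Gl y)) :=
    grad_tendsto hconc hdG hdGl hptφ
  intro T hT
  -- continuity facts
  have hαlimc : ContinuousOn αlim (Set.Ici 0) := fun s hs => (hαlim s hs).continuousWithinAt
  set K : Set E := αlim '' Set.Icc 0 T with hKdef
  have hKcpt : IsCompact K :=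
    isCompact_Icc.image_of_continuousOn (hαlimc.mono Set.Icc_subset_Ici_self)
  have hGlc : Continuous Gl := hglimc.sub (continuous_id.const_smul lam)
  have hGc : ∀ n, Continuous (G n) := fun n => (hgc n).sub (continuous_id.const_smul lam)
  obtain ⟨M, hM⟩ := hKcpt.exists_bound_of_continuousOn hGlc.continuousOn
  obtain ⟨C, hC⟩ := grad_unif_bdd hmono (fun y => by
    obtain ⟨c, hc⟩ := (hGpt y).norm.bddAbove_range
    exact ⟨c, fun n => hc ⟨n, rfl⟩⟩) hKcpt
  -- the error term along the limit curve
  set ε : ℕ → ℝ → ℝ := fun n s => ‖G n (αlim s) - Gl (αlim s)‖ with hεdef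
  have hεnonneg : ∀ n s, 0 ≤ ε n s := fun n s => norm_nonneg _
  have hεcont : ∀ n, ContinuousOn (ε n) (Set.Ici 0) := fun n =>
    (((hGc n).comp_continuousOn hαlimc).sub (hGlc.comp_continuousOn hαlimc)).norm
  have hεbd : ∀ n, ∀ s ∈ Set.Icc 0 T, ε n s ≤ C + M := by
    intro n s hs
    have hmem : αlim s ∈ K := Set.mem_image_of_mem _ hs
    calc ε n s ≤ ‖G n (αlim s)‖ + ‖Gl (αlim s)‖ := norm_sub_le _ _
      _ ≤ C + M := add_le_add (hC n _ hmem) (hM _ hmem)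
  have hεpt : ∀ s, Tendsto (fun n => ε n s) atTop (𝓝 0) := by
    intro s
    have h1 : Tendsto (fun n => G n (αlim s) - Gl (αlim s)) atTop (𝓝 0) := by
      simpa using (hGpt (αlim s)).sub (tendsto_const_nhds (x := Gl (αlim s)))
    simpa using h1.norm
  -- its primitive
  set En : ℕ → ℝ → ℝ := fun n u => ∫ s in (0:ℝ)..u, ε n s with hEndef
  have hints : ∀ n, ∀ u ∈ Set.Icc (0:ℝ) T, IntervalIntegrable (ε n) volume 0 u := by
    intro n u hu
    apply ContinuousOn.intervalIntegrable
    rw [Set.uIcc_of_le hu.1]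
    exact (hεcont n).mono (Set.Icc_subset_Ici_self)
  have hE0 : ∀ n, En n 0 = 0 := by intro n; simp [hEndef]
  have hEnn : ∀ n, ∀ u ∈ Set.Icc (0:ℝ) T, 0 ≤ En n u := fun n u hu =>
    intervalIntegral.integral_nonneg hu.1 (fun s _ => hεnonneg n s)
  have hEcont : ∀ n, ContinuousOn (En n) (Set.Icc 0 T) := by
    intro n
    have hio : IntegrableOn (ε n) (Set.Icc 0 T) volume :=
      ((hεcont n).mono Set.Icc_subset_Ici_self).integrableOn_compact isCompact_Icc
    have h1 := intervalIntegral.continuousOn_primitive (a := (0:ℝ)) (b := T) hio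
    refine ContinuousOn.congr h1 fun u hu => ?_
    rw [hEndef]
    exact intervalIntegral.integral_of_le hu.1
  have hEd : ∀ n, ∀ u ∈ Set.Ioo (0:ℝ) T, HasDerivAt (En n) (ε n u) u := by
    intro n u hu
    refine intervalIntegral.integral_hasDerivAt_right (hints n u ⟨hu.1.le, hu.2.le⟩) ?_ ?_
    · exact ContinuousOn.stronglyMeasurableAtFilter isOpen_Ioi
        ((hεcont n).mono (Set.Ioi_subset_Ici_self)) u hu.1
    · exact (hεcont n).continuousAt (Ici_mem_nhds hu.1)
  have hElim : Tendsto (fun n => En n T) atTop (𝓝 0) := by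
    have heq : ∀ n, En n T = ∫ s in Set.Ioc (0:ℝ) T, ε n s := fun n =>
      intervalIntegral.integral_of_le hT
    have hdct := MeasureTheory.tendsto_integral_of_dominated_convergence
      (μ := volume.restrict (Set.Ioc (0:ℝ) T)) (F := fun n s => ε n s)
      (f := fun _ => (0:ℝ)) (fun _ => C + M)
      (fun n => ((hεcont n).mono (fun s hs => le_of_lt hs.1)).aestronglyMeasurable
        measurableSet_Ioc)
      (integrableOn_const measure_Ioc_lt_top.ne)
      (fun n => (ae_restrict_iff' measurableSet_Ioc).mpr (Filter.Eventually.of_forall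
        fun s hs => by
          rw [Real.norm_eq_abs, abs_of_nonneg (hεnonneg n s)]
          exact hεbd n s ⟨hs.1.le, hs.2⟩))
      (Filter.Eventually.of_forall fun s => hεpt s)
    simp only [MeasureTheory.integral_zero] at hdct
    exact Tendsto.congr (fun n => (heq n).symm) hdct
  -- the squared distance and its differential inequality
  set w : ℕ → ℝ → ℝ := fun n s => ‖α n s - αlim s‖ ^ 2 with hwdef
  have hwnn : ∀ n s, 0 ≤ w n s := fun n s => sq_nonneg _
  have hwd : ∀ n, ∀ s ∈ Set.Ici (0:ℝ), HasDerivWithinAt (w n)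
      (2 * ⟪α n s - αlim s, g n (α n s) - glim (αlim s)⟫) (Set.Ici 0) s :=
    fun n s hs => ((hα n s hs).sub (hαlim s hs)).norm_sq
  have hkey : ∀ n, ∀ s ∈ Set.Icc (0:ℝ) T,
      2 * (⟪α n s - αlim s, g n (α n s) - glim (αlim s)⟫ : ℝ)
        ≤ (2 * lam + ε n s) * w n s + ε n s := by
    intro n s hs
    set x := α n s with hx
    set z := αlim s with hz
    have h1 : (⟪x - z, G n x - G n z⟫ : ℝ) ≤ 0 := by
      rw [real_inner_comm]; exact hmono n x z
    have h2 : (⟪x - z, G n z - Gl z⟫ : ℝ) ≤ ε n s * ‖x - z‖ := by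
      rw [real_inner_comm]
      exact le_trans (real_inner_le_norm _ _) le_rfl
    have expand : (⟪x - z, g n x - glim z⟫ : ℝ)
        = ⟪x - z, G n x - G n z⟫ + ⟪x - z, G n z - Gl z⟫ + lam * ⟪x - z, x - z⟫ := by
      have e : g n x - glim z = (G n x - G n z) + (G n z - Gl z) + lam • (x - z) := by
        simp only [hGdef, hGldef, smul_sub]
        abel
      rw [e, inner_add_right, inner_add_right, real_inner_smul_right]
    have hself : (⟪x - z, x - z⟫ : ℝ) = ‖x - z‖ ^ 2 := real_inner_self_eq_norm_sq _
    have hval : w n s = ‖x - z‖ ^ 2 := rfl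
    have htwo : 2 * ‖x - z‖ ≤ 1 + ‖x - z‖ ^ 2 := by nlinarith [sq_nonneg (‖x - z‖ - 1)]
    rw [expand, hself, hval]
    nlinarith [hεnonneg n s, norm_nonneg (x - z)]
  -- the Gronwall functional
  set Cexp : ℝ := Real.exp (2 * |lam| * T) with hCexp
  have hexp_le : ∀ n, ∀ s ∈ Set.Icc (0:ℝ) T,
      Real.exp (-(2 * lam * s) - En n s) ≤ Cexp := by
    intro n s hs
    apply Real.exp_le_exp.mpr
    have h1 : -(2 * lam * s) ≤ 2 * |lam| * s := by
      have := neg_abs_le (2 * lam * s)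
      calc -(2 * lam * s) ≤ |2 * lam * s| := neg_le_abs _
        _ = 2 * |lam| * s := by
          rw [abs_mul, abs_mul, abs_of_nonneg (by norm_num : (0:ℝ) ≤ 2),
            abs_of_nonneg hs.1]
    have h2 : 2 * |lam| * s ≤ 2 * |lam| * T :=
      mul_le_mul_of_nonneg_left hs.2 (by positivity)
    have h3 := hEnn n s hs
    linarith
  set ψ : ℕ → ℝ → ℝ := fun n s =>
    w n s * Real.exp (-(2 * lam * s) - En n s) - Cexp * En n s with hψdef
  have hψd : ∀ n, ∀ u ∈ Set.Ioo (0:ℝ) T, ∃ v, HasDerivAt (ψ n) v u ∧ v ≤ 0 := by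
    intro n u hu
    have huIcc : u ∈ Set.Icc (0:ℝ) T := ⟨hu.1.le, hu.2.le⟩
    have hw' : HasDerivAt (w n)
        (2 * ⟪α n u - αlim u, g n (α n u) - glim (αlim u)⟫) u :=
      (hwd n u hu.1.le).hasDerivAt (Ici_mem_nhds hu.1)
    have ha : HasDerivAt (fun s => -(2 * lam * s) - En n s)
        (-(2 * lam) - ε n u) u := by
      have h1 : HasDerivAt (fun s : ℝ => 2 * lam * s) (2 * lam) u := by
        simpa using (hasDerivAt_id u).const_mul (2 * lam)
      exact h1.neg.sub (hEd n u hu)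
    have hexp' := ha.exp
    have hprod := hw'.mul hexp'
    have hfull := hprod.sub ((hEd n u hu).const_mul Cexp)
    refine ⟨_, hfull, ?_⟩
    set X := Real.exp (-(2 * lam * u) - En n u) with hX
    have hXpos : 0 < X := Real.exp_pos _
    have hXle : X ≤ Cexp := hexp_le n u huIcc
    have hk := hkey n u huIcc
    have hεn := hεnonneg n u
    have hwn := hwnn n u
    have hmul := mul_le_mul_of_nonneg_right hk hXpos.le
    nlinarith [mul_le_mul_of_nonneg_right hXle hεn]
  have hψanti : ∀ n, AntitoneOn (ψ n) (Set.Icc 0 T) := by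
    intro n
    apply antitoneOn_of_deriv_nonpos (convex_Icc 0 T)
    · have hwcont : ContinuousOn (w n) (Set.Icc 0 T) := fun s hs =>
        ((hwd n s (Set.Icc_subset_Ici_self hs)).continuousWithinAt).mono
          Set.Icc_subset_Ici_self
      have haux : ContinuousOn (fun s => Real.exp (-(2 * lam * s) - En n s))
          (Set.Icc 0 T) :=
        Real.continuous_exp.comp_continuousOn
          ((((continuous_const.mul continuous_id).neg).continuousOn).sub (hEcont n))
      exact (hwcont.mul haux).sub (continuousOn_const.mul (hEcont n))
    · rw [interior_Icc]
      intro u hu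
      exact ((hψd n u hu).choose_spec.1).differentiableAt.differentiableWithinAt
    · rw [interior_Icc]
      intro u hu
      rw [((hψd n u hu).choose_spec.1).deriv]
      exact (hψd n u hu).choose_spec.2
  -- integrate the inequality
  have hq : ∀ n, w n T ≤ (w n 0 + Cexp * En n T) * Real.exp (2 * lam * T + En n T) := by
    intro n
    have h1 : ψ n T ≤ ψ n 0 :=
      hψanti n (Set.left_mem_Icc.mpr hT) (Set.right_mem_Icc.mpr hT) hT
    have h0' : ψ n 0 = w n 0 := by
      simp [hψdef, hE0 n]
    set P := Real.exp (-(2 * lam * T) - En n T) with hP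
    set Q := Real.exp (2 * lam * T + En n T) with hQ
    have hPQ : P * Q = 1 := by
      rw [hP, hQ, ← Real.exp_add]
      ring_nf
      exact Real.exp_zero
    have hQpos : 0 < Q := Real.exp_pos _
    have h3 : w n T * P ≤ w n 0 + Cexp * En n T := by
      have : ψ n T = w n T * P - Cexp * En n T := rfl
      rw [this, h0'] at h1
      linarith
    calc w n T = w n T * P * Q := by rw [mul_assoc, hPQ, mul_one]
      _ ≤ (w n 0 + Cexp * En n T) * Q := mul_le_mul_of_nonneg_right h3 hQpos.le
  -- pass to the limit
  have hA : Tendsto (fun n => w n 0) atTop (𝓝 0) := by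
    have h1 : Tendsto (fun n => α n 0 - αlim 0) atTop (𝓝 0) := by
      simpa using h0.sub (tendsto_const_nhds (x := αlim 0))
    have h2 : Tendsto (fun n => ‖α n 0 - αlim 0‖) atTop (𝓝 0) := by
      simpa using h1.norm
    simpa [hwdef] using h2.pow 2
  have hRHS : Tendsto (fun n => (w n 0 + Cexp * En n T)
      * Real.exp (2 * lam * T + En n T)) atTop (𝓝 0) := by
    have h1 := (hA.add (hElim.const_mul Cexp)).mul
      ((Real.continuous_exp.tendsto _).comp ((tendsto_const_nhds
        (x := 2 * lam * T)).add hElim))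
    simpa using h1
  have hwT : Tendsto (fun n => w n T) atTop (𝓝 0) :=
    squeeze_zero (fun n => hwnn n T) hq hRHS
  -- conclude
  have hnorm : Tendsto (fun n => ‖α n T - αlim T‖) atTop (𝓝 0) := by
    have h1 := (Real.continuous_sqrt.tendsto 0).comp hwT
    rw [Real.sqrt_zero] at h1
    refine h1.congr fun n => ?_
    exact Real.sqrt_sq (norm_nonneg _)
  rw [tendsto_iff_norm_sub_tendsto_zero]
  exact hnorm
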